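/- (Irvine's conjecture) For all n ≥ 0, g_n = ∑_{1 ≤ i ≤ n} k_i. -/

import Mathlib

open Finset

/-- The substitution `h` with `h(1) = 110` and `h(0) = 11`. -/
def hsub : ℕ → List ℕ
  | 0 => [1, 1]
  | 1 => [1, 1, 0]
  | _ => []

/-- `h` extended to words by concatenation. -/
def happ (w : List ℕ) : List ℕ := w.flatMap hsub

/-- `K n = h^n(1)`. -/
def Kword (n : ℕ) : List ℕ := happ^[n] [1]

lemma happ_append (u v : List ℕ) : happ (u ++ v) = happ u ++ happ v := by
  simp [happ]

lemma happ_binary {w : List ℕ} (hw : ∀ x ∈ w, x ≤ 1) : ∀ x ∈ happ w, x ≤ 1 := by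
  intro x hx
  simp only [happ, List.mem_flatMap] at hx
  obtain ⟨a, ha, hxa⟩ := hx
  have := hw a ha
  interval_cases a <;> simp [hsub] at hxa <;> omega

lemma happ_sum {w : List ℕ} (hw : ∀ x ∈ w, x ≤ 1) : (happ w).sum = 2 * w.length := by
  induction w with
  | nil => simp [happ]
  | cons a u ih =>
    have ha : a ≤ 1 := hw a (by simp)
    have : happ (a :: u) = hsub a ++ happ u := by simp [happ]
    rw [this, List.sum_append, ih (fun x hx => hw x (by simp [hx]))]
    interval_cases a <;> simp [hsub] <;> ring

lemma happ_length {w : List ℕ} (hw : ∀ x ∈ w, x ≤ 1) :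
    (happ w).length = 2 * w.length + w.sum := by
  induction w with
  | nil => simp [happ]
  | cons a u ih =>
    have ha : a ≤ 1 := hw a (by simp)
    have : happ (a :: u) = hsub a ++ happ u := by simp [happ]
    rw [this, List.length_append, ih (fun x hx => hw x (by simp [hx]))]
    interval_cases a <;> simp [hsub] <;> ring

lemma Kword_succ (n : ℕ) : Kword (n + 1) = happ (Kword n) := by
  simp [Kword, Function.iterate_succ_apply']

lemma Kword_binary (n : ℕ) : ∀ x ∈ Kword n, x ≤ 1 := by
  induction n with
  | zero => simp [Kword]
  | succ n ih => rw [Kword_succ]; exact happ_binary ih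

lemma Kword_length (n : ℕ) : n + 1 ≤ (Kword n).length := by
  induction n with
  | zero => simp [Kword]
  | succ n ih =>
    rw [Kword_succ, happ_length (Kword_binary n)]
    omega

/-- Prefix property -/
lemma happ_prefix {u v : List ℕ} (h : u <+: v) : happ u <+: happ v := by
  obtain ⟨t, rfl⟩ := h
  exact ⟨happ t, (happ_append u t).symm⟩

lemma Kword_prefix (n : ℕ) : Kword n <+: Kword (n + 1) := by
  induction n with
  | zero => exact ⟨[1, 0], rfl⟩
  | succ n ih => rw [Kword_succ, Kword_succ]; exact happ_prefix ih


lemma take_sum_le (l : List ℕ) (n : ℕ) : (l.take n).sum ≤ l.sum := by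
  conv_rhs => rw [← List.take_append_drop n l]
  rw [List.sum_append]
  exact Nat.le_add_right _ _

/-- The key finite recurrence. -/
lemma core (w : List ℕ) (hw : ∀ x ∈ w, x ≤ 1) :
    ∀ n : ℕ, 1 ≤ n → n ≤ (happ w).length →
      ((happ w).take n).sum = n - (w.take (((happ w).take (n - 1)).sum / 2)).sum := by
  induction w using List.reverseRecOn with
  | nil => intro n h1 hn; simp [happ] at hn; omega
  | append_singleton u a ih =>
    intro n h1 hn
    have hu : ∀ x ∈ u, x ≤ 1 := fun x hx => hw x (by simp [hx])
    have ha : a ≤ 1 := hw a (by simp)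
    have hsu : (happ u).sum = 2 * u.length := happ_sum hu
    have hlu : (happ u).length = 2 * u.length + u.sum := happ_length hu
    have hap : happ (u ++ [a]) = happ u ++ hsub a := happ_append u [a] ▸ by
      simp [happ_append, happ]
    rw [hap] at hn ⊢
    by_cases hcase : n ≤ (happ u).length
    · -- inside happ u
      rw [List.take_append_of_le_length hcase,
          List.take_append_of_le_length (le_trans (Nat.sub_le n 1) hcase)]
      have ht : ((happ u).take (n - 1)).sum ≤ 2 * u.length := hsu ▸ take_sum_le _ _
      have ht2 : ((happ u).take (n - 1)).sum / 2 ≤ u.length := by omega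
      rw [List.take_append_of_le_length ht2]
      exact ih hu n h1 hcase
    · -- in the new block
      push_neg at hcase
      set L := (happ u).length with hL
      obtain ⟨r, hr⟩ : ∃ r, n = L + r := ⟨n - L, by omega⟩
      have hr1 : 1 ≤ r := by omega
      have hrle : r ≤ (hsub a).length := by
        rw [List.length_append] at hn; omega
      have husum : u.sum ≤ u.length := by
        calc u.sum ≤ u.length * 1 := List.sum_le_card_nsmul u 1 hu
        _ = u.length := by ring
      have htake : ∀ s : ℕ, (List.take (L + s) (happ u ++ hsub a)).sum
          = 2 * u.length + ((hsub a).take s).sum := by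
        intro s
        rw [hL, List.take_length_add_append, List.sum_append, hsu]
      interval_cases a
      · -- a = 0, hsub = [1,1]
        simp only [hsub] at htake ⊢
        replace hrle : r ≤ 2 := by simp [hsub] at hrle; omega
        interval_cases r
        · -- r = 1
          rw [hr, htake 1]
          have : L + 1 - 1 = L + 0 := by omega
          rw [this, htake 0]
          have : (2 * u.length + ([1,1].take 0).sum) / 2 = u.length := by simp
          rw [this, List.take_append_of_le_length (le_refl _), List.take_length]
          simp; omega
        · -- r = 2
          rw [hr, htake 2]
          have : L + 2 - 1 = L + 1 := by omega
          rw [this, htake 1]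
          have : (2 * u.length + ([1,1].take 1).sum) / 2 = u.length := by simp; omega
          rw [this, List.take_append_of_le_length (le_refl _), List.take_length]
          simp; omega
      · -- a = 1, hsub = [1,1,0]
        simp only [hsub] at htake ⊢
        replace hrle : r ≤ 3 := by simp [hsub] at hrle; omega
        interval_cases r
        · rw [hr, htake 1]
          have : L + 1 - 1 = L + 0 := by omega
          rw [this, htake 0]
          have : (2 * u.length + ([1,1,0].take 0).sum) / 2 = u.length := by simp
          rw [this, List.take_append_of_le_length (le_refl _), List.take_length]
          simp; omega
        · rw [hr, htake 2]
          have : L + 2 - 1 = L + 1 := by omega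
          rw [this, htake 1]
          have : (2 * u.length + ([1,1,0].take 1).sum) / 2 = u.length := by simp; omega
          rw [this, List.take_append_of_le_length (le_refl _), List.take_length]
          simp; omega
        · rw [hr, htake 3]
          have : L + 3 - 1 = L + 2 := by omega
          rw [this, htake 2]
          have : (2 * u.length + ([1,1,0].take 2).sum) / 2 = u.length + 1 := by simp
          rw [this]
          have : List.take (u.length + 1) (u ++ [1]) = u ++ [1] := by
            apply List.take_of_length_le; simp
          rw [this]
          simp; omega

theorem irvine_conjecture
    (k : ℕ → ℕ)
    (hk : ∀ (m i : ℕ), i < (Kword m).length → k (i + 1) = (Kword m).getD i 0)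
    (g : ℕ → ℕ)
    (hg0 : g 0 = 0) (hg : ∀ n : ℕ, 1 ≤ n → g n = n - g (g (n - 1) / 2)) :
    ∀ n : ℕ, g n = ∑ i ∈ Finset.Icc 1 n, k i := by
  -- partial sums of k agree with take-sums of Kword
  have hks : ∀ m n : ℕ, n ≤ (Kword m).length →
      ∑ i ∈ Finset.Icc 1 n, k i = ((Kword m).take n).sum := by
    intro m n
    induction n with
    | zero => intro _; simp
    | succ n ih =>
      intro hn
      have hn' : n < (Kword m).length := hn
      rw [Finset.sum_Icc_succ_top (by omega : 1 ≤ n + 1), ih (by omega),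
        List.sum_take_succ _ _ hn', hk m n hn', List.getD_eq_getElem _ _ hn']
  -- each letter is at most 1
  have hk1 : ∀ i : ℕ, k (i + 1) ≤ 1 := by
    intro i
    have hl : i < (Kword i).length := by have := Kword_length i; omega
    rw [hk i i hl, List.getD_eq_getElem _ _ hl]
    exact Kword_binary i _ (List.getElem_mem hl)
  have hsle : ∀ n : ℕ, (∑ i ∈ Finset.Icc 1 n, k i) ≤ n := by
    intro n
    calc (∑ i ∈ Finset.Icc 1 n, k i) ≤ (Finset.Icc 1 n).card • 1 := by
          apply Finset.sum_le_card_nsmul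
          intro x hx
          simp only [Finset.mem_Icc] at hx
          obtain ⟨h1, _⟩ := hx
          obtain ⟨j, rfl⟩ : ∃ j, x = j + 1 := ⟨x - 1, by omega⟩
          exact hk1 j
      _ = n := by simp
  -- main recurrence for partial sums
  have hrec : ∀ n : ℕ, 1 ≤ n →
      (∑ i ∈ Finset.Icc 1 n, k i)
        = n - ∑ i ∈ Finset.Icc 1 ((∑ i ∈ Finset.Icc 1 (n - 1), k i) / 2), k i := by
    intro n h1
    have hlen : n + 1 ≤ (Kword n).length := Kword_length n
    have hlen2 : n ≤ (happ (Kword n)).length := by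
      rw [← Kword_succ]
      have := Kword_length (n + 1); omega
    have hc := core (Kword n) (Kword_binary n) n h1 hlen2
    rw [← Kword_succ] at hc
    rw [hks (n + 1) n (by rw [Kword_succ]; exact le_trans (by omega) hlen2), hc,
      ← hks (n + 1) (n - 1) (by have := Kword_length (n+1); omega)]
    congr 1
    have h2 : (∑ i ∈ Finset.Icc 1 (n - 1), k i) / 2 ≤ (Kword n).length := by
      have := hsle (n - 1); omega
    rw [← hks n _ h2]
  -- strong induction
  intro n
  induction n using Nat.strong_induction_on with
  | _ n ih =>
    match n with
    | 0 => simpa using hg0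
    | (m + 1) =>
      rw [hg (m + 1) (by omega)]
      have e1 : g (m + 1 - 1) = ∑ i ∈ Finset.Icc 1 m, k i := by
        simpa using ih m (by omega)
      rw [e1]
      have hle : (∑ i ∈ Finset.Icc 1 m, k i) / 2 ≤ m := by have := hsle m; omega
      rw [ih _ (by omega : (∑ i ∈ Finset.Icc 1 m, k i) / 2 < m + 1)]
      have := hrec (m + 1) (by omega)
      simpa using this.symm
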